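/- With the data below, define w(t, i) := (exp((T − t)·A)·𝟏)_i, which is strictly positive for t ∈ [0, T], and v(t, i, c) := c + (1/k)·log w(t, i). Fix t ∈ [0, T] and c ∈ ℝ. Then: (a) for every i ∈ {0, …, 2N−1}, the function p ↦ exp(−k·p·Z⁺_i·Δ⁺_i)·( v(t, i+1, c + p·Z⁺_i·Δ⁺_i) − v(t, i, c) ) on ℝ attains its greatest value at the point p*(t, i) := (1/(k·Z⁺_i·Δ⁺_i))·( 1 + log( w(t, i) / w(t, i+1) ) ), and this maximizer is unique; and (b) for every i ∈ {1, …, 2N}, the function m ↦ exp(−k·m·Z⁻_i·Δ⁻_i)·( v(t, i−1, c + m·Z⁻_i·Δ⁻_i) − v(t, i, c) ) on ℝ attains its greatest value at the point m*(t, i) := (1/(k·Z⁻_i·Δ⁻_i))·( 1 + log( w(t, i) / w(t, i−1) ) ), and this maximizer is unique. -/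

import Mathlib

section Aux

/-- Basic scalar inequality: `exp(-(a p)) (a p + L) ≤ exp (L - 1)`. -/
theorem gle_aux (a L p : ℝ) :
    Real.exp (-(a * p)) * (a * p + L) ≤ Real.exp (L - 1) := by
  have h1 : a * p + L ≤ Real.exp (a * p + L - 1) := by
    have := Real.add_one_le_exp (a * p + L - 1); linarith
  calc Real.exp (-(a * p)) * (a * p + L)
      ≤ Real.exp (-(a * p)) * Real.exp (a * p + L - 1) :=
        mul_le_mul_of_nonneg_left h1 (Real.exp_pos _).le
    _ = Real.exp (L - 1) := by rw [← Real.exp_add]; ring_nf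

theorem glt_aux (a L p : ℝ) (h : a * p + L ≠ 1) :
    Real.exp (-(a * p)) * (a * p + L) < Real.exp (L - 1) := by
  have h1 : a * p + L < Real.exp (a * p + L - 1) := by
    have := Real.add_one_lt_exp (x := a * p + L - 1) (by intro hc; apply h; linarith)
    linarith
  calc Real.exp (-(a * p)) * (a * p + L)
      < Real.exp (-(a * p)) * Real.exp (a * p + L - 1) :=
        (mul_lt_mul_iff_right₀ (Real.exp_pos _)).2 h1
    _ = Real.exp (L - 1) := by rw [← Real.exp_add]; ring_nf

/-- Core optimization lemma. -/
theorem core_aux (a L k : ℝ) (ha : 0 < a) (hk : 0 < k) (G : ℝ → ℝ) (ps : ℝ)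
    (hG : ∀ p, G p = (1 / k) * (Real.exp (-(a * p)) * (a * p + L)))
    (hps : a * ps + L = 1) :
    (∀ p, G p ≤ G ps) ∧ (∀ p, p ≠ ps → G p < G ps) := by
  have hGps : G ps = (1 / k) * Real.exp (L - 1) := by
    rw [hG ps, show -(a * ps) = L - 1 by linarith, hps, mul_one]
  constructor
  · intro p
    rw [hG p, hGps]
    exact mul_le_mul_of_nonneg_left (gle_aux a L p) (by positivity)
  · intro p hp
    rw [hG p, hGps]
    refine mul_lt_mul_of_pos_left ?_ (by positivity)
    refine glt_aux a L p fun hc => hp ?_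
    have : a * p = a * ps := by linarith
    exact mul_left_cancel₀ ha.ne' this

/-- Entrywise bounds on the exponential of an entrywise-nonnegative matrix. -/
theorem exp_entry_aux {ι : Type*} [Fintype ι] [DecidableEq ι] (B : Matrix ι ι ℝ)
    (hB : ∀ i j, 0 ≤ B i j) :
    (∀ i j, 0 ≤ NormedSpace.exp B i j) ∧ (∀ i, 1 ≤ NormedSpace.exp B i i) := by
  letI : SeminormedRing (Matrix ι ι ℝ) := Matrix.linftyOpSemiNormedRing
  letI : NormedRing (Matrix ι ι ℝ) := Matrix.linftyOpNormedRing
  letI : NormedAlgebra ℝ (Matrix ι ι ℝ) := Matrix.linftyOpNormedAlgebra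
  have hpow : ∀ (n : ℕ) (i j : ι), 0 ≤ (B ^ n) i j := by
    intro n
    induction n with
    | zero =>
      intro i j; rw [pow_zero]
      by_cases h : i = j <;> simp [Matrix.one_apply, h]
    | succ n ih =>
      intro i j; rw [pow_succ, Matrix.mul_apply]
      exact Finset.sum_nonneg fun x _ => mul_nonneg (ih i x) (hB x j)
  have hsum : Summable fun n : ℕ => ((Nat.factorial n : ℝ))⁻¹ • B ^ n :=
    NormedSpace.expSeries_summable' (𝕂 := ℝ) B
  have hsum1 : ∀ i, Summable fun n : ℕ => (((Nat.factorial n : ℝ))⁻¹ • B ^ n) i :=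
    fun i => Pi.summable.mp hsum i
  have hsum2 : ∀ i j, Summable fun n : ℕ => (((Nat.factorial n : ℝ))⁻¹ • B ^ n) i j :=
    fun i j => Pi.summable.mp (hsum1 i) j
  have hentry : ∀ i j, NormedSpace.exp B i j = ∑' n : ℕ, (((Nat.factorial n : ℝ))⁻¹ • B ^ n) i j := by
    intro i j
    simp only [NormedSpace.exp_eq_tsum ℝ]
    exact (congrFun (tsum_apply (x := i) hsum) j).trans (tsum_apply (hsum1 i))
  have hterm : ∀ (n : ℕ) (i j : ι), 0 ≤ (((Nat.factorial n : ℝ))⁻¹ • B ^ n) i j := by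
    intro n i j
    have h : (((Nat.factorial n : ℝ))⁻¹ • B ^ n) i j = ((Nat.factorial n : ℝ))⁻¹ * (B ^ n) i j := rfl
    rw [h]
    exact mul_nonneg (by positivity) (hpow n i j)
  constructor
  · intro i j
    rw [hentry i j]
    exact tsum_nonneg fun n => hterm n i j
  · intro i
    rw [hentry i i]
    have h0 : ((Nat.factorial 0 : ℝ)⁻¹ • B ^ 0) i i = 1 := by
      simp [Matrix.one_apply]
    calc (1 : ℝ) = ((Nat.factorial 0 : ℝ)⁻¹ • B ^ (0 : ℕ)) i i := h0.symm
      _ ≤ ∑' n : ℕ, (((Nat.factorial n : ℝ))⁻¹ • B ^ n) i i :=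
        Summable.le_tsum (hsum2 i i) 0 fun n _ => hterm n i i

end Aux

/-- The optimal dynamic selling and buying fees of the AMM in the
constant-oracle-price regime: `p*(t,i)` and `m*(t,i)` are the unique maximizers of
the respective terms of the HJB equation. -/
theorem stmt7 (N : ℕ) (hN : 1 ≤ N)
    (Δp Δm Zp Zm P : Fin (2 * N + 1) → ℝ)
    (hΔp : ∀ i : Fin (2 * N + 1), (i : ℕ) < 2 * N → 0 < Δp i)
    (hΔm : ∀ i : Fin (2 * N + 1), 0 < (i : ℕ) → 0 < Δm i)
    (hZp : ∀ i : Fin (2 * N + 1), (i : ℕ) < 2 * N → 0 < Zp i)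
    (hZm : ∀ i : Fin (2 * N + 1), 0 < (i : ℕ) → 0 < Zm i)
    (lp lm k s T : ℝ) (hlp : 0 < lp) (hlm : 0 < lm) (hk : 0 < k) (hT : 0 < T)
    (A : Matrix (Fin (2 * N + 1)) (Fin (2 * N + 1)) ℝ)
    (hA : ∀ i j : Fin (2 * N + 1), A i j =
      if (j : ℕ) = (i : ℕ) then -(k * P i)
      else if (j : ℕ) = (i : ℕ) + 1 then
        lp * Real.exp (-(k * s * Δp i) - 1) * Real.exp (k * Zp i * Δp i)
      else if (j : ℕ) + 1 = (i : ℕ) then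
        lm * Real.exp (k * s * Δm i - 1) * Real.exp (-(k * Zm i * Δm i))
      else 0)
    (w : ℝ → Fin (2 * N + 1) → ℝ)
    (hw : ∀ t : ℝ, w t = (NormedSpace.exp ((T - t) • A)).mulVec 1)
    (v : ℝ → Fin (2 * N + 1) → ℝ → ℝ)
    (hv : ∀ t : ℝ, ∀ i : Fin (2 * N + 1), ∀ c : ℝ,
      v t i c = c + (1 / k) * Real.log (w t i))
    (t : ℝ) (ht : t ∈ Set.Icc (0 : ℝ) T) (c : ℝ)
    -- the selling-fee objective `Gp i` and the optimal selling fee `pstar i`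
    (Gp : Fin (2 * N + 1) → ℝ → ℝ)
    (hGp : ∀ i : Fin (2 * N + 1), ∀ h : (i : ℕ) < 2 * N, ∀ p : ℝ,
      Gp i p = Real.exp (-(k * p * Zp i * Δp i)) *
        (v t ⟨(i : ℕ) + 1, by omega⟩ (c + p * Zp i * Δp i) - v t i c))
    (pstar : Fin (2 * N + 1) → ℝ)
    (hpstar : ∀ i : Fin (2 * N + 1), ∀ h : (i : ℕ) < 2 * N,
      pstar i = (1 / (k * Zp i * Δp i)) *
        (1 + Real.log (w t i / w t ⟨(i : ℕ) + 1, by omega⟩)))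
    -- the buying-fee objective `Gm i` and the optimal buying fee `mstar i`
    (Gm : Fin (2 * N + 1) → ℝ → ℝ)
    (hGm : ∀ i : Fin (2 * N + 1), ∀ h : 0 < (i : ℕ), ∀ m : ℝ,
      Gm i m = Real.exp (-(k * m * Zm i * Δm i)) *
        (v t ⟨(i : ℕ) - 1, by omega⟩ (c + m * Zm i * Δm i) - v t i c))
    (mstar : Fin (2 * N + 1) → ℝ)
    (hmstar : ∀ i : Fin (2 * N + 1), ∀ h : 0 < (i : ℕ),
      mstar i = (1 / (k * Zm i * Δm i)) *
        (1 + Real.log (w t i / w t ⟨(i : ℕ) - 1, by omega⟩))) :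
    -- `w` is strictly positive at time `t ∈ [0, T]`
    (∀ i : Fin (2 * N + 1), 0 < w t i) ∧
    -- (a) `pstar i` is the unique maximizer of `Gp i`
    (∀ i : Fin (2 * N + 1), (i : ℕ) < 2 * N →
      (∀ p : ℝ, Gp i p ≤ Gp i (pstar i)) ∧
      (∀ p : ℝ, p ≠ pstar i → Gp i p < Gp i (pstar i))) ∧
    -- (b) `mstar i` is the unique maximizer of `Gm i`
    (∀ i : Fin (2 * N + 1), 0 < (i : ℕ) →
      (∀ m : ℝ, Gm i m ≤ Gm i (mstar i)) ∧
      (∀ m : ℝ, m ≠ mstar i → Gm i m < Gm i (mstar i))) := by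
  have hr : 0 ≤ T - t := by linarith [ht.2]
  obtain ⟨c0, hc0⟩ : ∃ c0 : ℝ, ∀ i, k * P i ≤ c0 :=
    ⟨Finset.univ.sup' Finset.univ_nonempty (fun i => k * P i),
      fun i => Finset.le_sup' (fun i => k * P i) (Finset.mem_univ i)⟩
  set r := T - t with hrdef
  set B : Matrix (Fin (2 * N + 1)) (Fin (2 * N + 1)) ℝ :=
    r • A + (r * c0) • (1 : Matrix (Fin (2 * N + 1)) (Fin (2 * N + 1)) ℝ) with hBdef
  have hAnn : ∀ i j : Fin (2 * N + 1), i ≠ j → 0 ≤ A i j := by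
    intro i j hij
    rw [hA i j, if_neg (fun hc => hij (Fin.ext hc.symm))]
    split_ifs
    · positivity
    · positivity
    · exact le_refl 0
  have hBnn : ∀ i j : Fin (2 * N + 1), 0 ≤ B i j := by
    intro i j
    by_cases h : i = j
    · subst h
      have hAi : A i i = -(k * P i) := by rw [hA i i, if_pos rfl]
      have : B i i = r * A i i + r * c0 := by
        simp [hBdef, Matrix.add_apply, Matrix.smul_apply, Matrix.one_apply_eq, smul_eq_mul]
      rw [this, hAi]
      have := mul_nonneg hr (sub_nonneg.2 (hc0 i))
      nlinarith
    · have : B i j = r * A i j := by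
        simp [hBdef, Matrix.add_apply, Matrix.smul_apply, Matrix.one_apply_ne h, smul_eq_mul]
      rw [this]
      exact mul_nonneg hr (hAnn i j h)
  have hcomm : Commute B ((-(r * c0)) • (1 : Matrix (Fin (2 * N + 1)) (Fin (2 * N + 1)) ℝ)) :=
    (Commute.one_right B).smul_right _
  have hsplit : r • A = B + (-(r * c0)) • (1 : Matrix (Fin (2 * N + 1)) (Fin (2 * N + 1)) ℝ) := by
    rw [hBdef, add_assoc, ← add_smul]
    simp
  have hscal : NormedSpace.exp ((-(r * c0)) • (1 : Matrix (Fin (2 * N + 1)) (Fin (2 * N + 1)) ℝ))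
      = Matrix.diagonal (fun _ => Real.exp (-(r * c0))) := by
    rw [Matrix.smul_one_eq_diagonal, Matrix.exp_diagonal]
    congr 1
    funext i
    rw [Pi.exp_def]
    exact (Real.exp_eq_exp_ℝ ▸ rfl)
  have hkey : NormedSpace.exp (r • A) =
      NormedSpace.exp B * Matrix.diagonal (fun _ => Real.exp (-(r * c0))) := by
    rw [hsplit, Matrix.exp_add_of_commute _ _ hcomm, hscal]
  obtain ⟨hnn, hdiag⟩ := exp_entry_aux B hBnn
  have hwt : ∀ i, w t i = Real.exp (-(r * c0)) * ∑ j, NormedSpace.exp B i j := by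
    intro i
    rw [hw t]
    show (NormedSpace.exp ((T - t) • A)).mulVec 1 i = _
    rw [← hrdef, hkey]
    simp only [Matrix.mulVec, dotProduct, Matrix.mul_diagonal, Pi.one_apply, mul_one]
    rw [Finset.mul_sum]
    exact Finset.sum_congr rfl fun j _ => mul_comm _ _
  have hwpos : ∀ i, 0 < w t i := by
    intro i
    rw [hwt i]
    refine mul_pos (Real.exp_pos _) (lt_of_lt_of_le one_pos ?_)
    exact le_trans (hdiag i) (Finset.single_le_sum (fun j _ => hnn i j) (Finset.mem_univ i))
  refine ⟨hwpos, fun i hi => ?_, fun i hi => ?_⟩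
  · -- selling side
    have ha : 0 < k * Zp i * Δp i := mul_pos (mul_pos hk (hZp i hi)) (hΔp i hi)
    refine core_aux (k * Zp i * Δp i)
      (Real.log (w t ⟨(i : ℕ) + 1, by omega⟩) - Real.log (w t i)) k ha hk (Gp i) (pstar i) ?_ ?_
    · intro p
      rw [hGp i hi p, hv, hv]
      rw [show -(k * p * Zp i * Δp i) = -(k * Zp i * Δp i * p) by ring]
      field_simp
      ring
    · rw [hpstar i hi, Real.log_div (hwpos _).ne' (hwpos _).ne']
      field_simp [(hZp i hi).ne', (hΔp i hi).ne']
      ring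
  · -- buying side
    have ha : 0 < k * Zm i * Δm i := mul_pos (mul_pos hk (hZm i hi)) (hΔm i hi)
    refine core_aux (k * Zm i * Δm i)
      (Real.log (w t ⟨(i : ℕ) - 1, by omega⟩) - Real.log (w t i)) k ha hk (Gm i) (mstar i) ?_ ?_
    · intro m
      rw [hGm i hi m, hv, hv]
      rw [show -(k * m * Zm i * Δm i) = -(k * Zm i * Δm i * m) by ring]
      field_simp
      ring
    · rw [hmstar i hi, Real.log_div (hwpos _).ne' (hwpos _).ne']
      field_simp [(hZm i hi).ne', (hΔm i hi).ne']
      ring
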